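/- Let H_X and H_Z be the 192 × 512 base matrices over 𝔽₂ whose rows are the incidence vectors of all affine cosets of A = span{e₁,e₂,e₃}, B = span{e₄,e₅,e₆}, C = span{e₇,e₈,e₉} (for H_X) and of D₁ = span{e₁,e₄,e₇}, D₂ = span{e₂,e₅,e₈}, D₃ = span{e₃,e₆,e₉} (for H_Z) in V = 𝔽₂⁹. Then the minimum distance of the CSS code defined by (H_X, H_Z) is exactly 8: every vector in ker(H_X) ⊆ 𝔽₂⁵¹² that is not in the row space of H_Z has Hamming weight at least 8, every vector in ker(H_Z) that is not in the row space of H_X has Hamming weight at least 8, and at least one of these two sets contains a vector of Hamming weight exactly 8. -/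
import Mathlib


open scoped Classical

/-- `V = 𝔽₂⁹`. -/
abbrev V : Type := Fin 9 → ZMod 2

/-- The standard basis vectors `e₁, …, e₉` (zero-indexed as `e 0, …, e 8`). -/
def e (i : Fin 9) : V := Pi.single i 1

/-- The family `A, B, C`: `Xfam 0 = A = span{e₁,e₂,e₃}`, `Xfam 1 = B`, `Xfam 2 = C`. -/
def Xfam (i : Fin 3) : Submodule (ZMod 2) V :=
  Submodule.span (ZMod 2)
    {e ⟨3 * i.val, by have := i.isLt; omega⟩,
     e ⟨3 * i.val + 1, by have := i.isLt; omega⟩,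
     e ⟨3 * i.val + 2, by have := i.isLt; omega⟩}

/-- The family `D₁, D₂, D₃`: `Zfam j = span{e_j, e_{j+3}, e_{j+6}}` (zero-indexed). -/
def Zfam (j : Fin 3) : Submodule (ZMod 2) V :=
  Submodule.span (ZMod 2)
    {e ⟨j.val, by have := j.isLt; omega⟩,
     e ⟨j.val + 3, by have := j.isLt; omega⟩,
     e ⟨j.val + 6, by have := j.isLt; omega⟩}

/-- Row index of `H_X`: a family index `i` together with an affine coset of `Xfam i`,
encoded as an element of the quotient `V ⧸ Xfam i`. -/
abbrev RX : Type := (i : Fin 3) × (V ⧸ Xfam i)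

/-- Row index of `H_Z`. -/
abbrev RZ : Type := (j : Fin 3) × (V ⧸ Zfam j)

/-- The base matrix `H_X`: the row indexed by a coset is its incidence vector. -/
noncomputable def HX : Matrix RX V (ZMod 2) := fun r x =>
  if (Submodule.Quotient.mk x : V ⧸ Xfam r.1) = r.2 then 1 else 0

/-- The base matrix `H_Z`. -/
noncomputable def HZ : Matrix RZ V (ZMod 2) := fun s x =>
  if (Submodule.Quotient.mk x : V ⧸ Zfam s.1) = s.2 then 1 else 0
/-- The row space of a base matrix: the `𝔽₂`-span of its rows. -/
def rowSpace {R : Type*} (H : Matrix R V (ZMod 2)) : Submodule (ZMod 2) (V → ZMod 2) :=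
  Submodule.span (ZMod 2) (Set.range H)

section Aux

lemma zmod2_ne_one {a : ZMod 2} (h : a ≠ 1) : a = 0 := by revert h; revert a; decide

lemma zmod2_add_self (a : ZMod 2) : a + a = 0 := by revert a; decide

lemma mem_span_triple {a b c x : V} :
    x ∈ Submodule.span (ZMod 2) {a, b, c} ↔
    ∃ r s t : ZMod 2, x = r • a + s • b + t • c := by
  constructor
  · intro h
    rw [Submodule.mem_span_insert] at h
    obtain ⟨r, z, hz, rfl⟩ := h
    rw [Submodule.mem_span_insert] at hz
    obtain ⟨s, w, hw, rfl⟩ := hz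
    rw [Submodule.mem_span_singleton] at hw
    obtain ⟨t, rfl⟩ := hw
    exact ⟨r, s, t, by ring⟩
  · rintro ⟨r, s, t, rfl⟩
    exact Submodule.add_mem _ (Submodule.add_mem _
      (Submodule.smul_mem _ _ (Submodule.subset_span (by simp)))
      (Submodule.smul_mem _ _ (Submodule.subset_span (by simp))))
      (Submodule.smul_mem _ _ (Submodule.subset_span (by simp)))

lemma e_apply (i k : Fin 9) : e i k = if k = i then 1 else 0 := by
  simp [e, Pi.single_apply]

def sigX (t : Fin 3) (x : V) : Fin 3 → ZMod 2 :=
  fun j => x ⟨3 * t.val + j.val, by omega⟩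

def sigZ (t : Fin 3) (x : V) : Fin 3 → ZMod 2 :=
  fun j => x ⟨t.val + 3 * j.val, by omega⟩

lemma sigX_add (t : Fin 3) (x y : V) : sigX t (x + y) = sigX t x + sigX t y := rfl

lemma sigZ_add (t : Fin 3) (x y : V) : sigZ t (x + y) = sigZ t x + sigZ t y := rfl

lemma hinvX {t t' : Fin 3} (h : t ≠ t') {s : V} (hs : s ∈ Xfam t') : sigX t s = 0 := by
  rw [Xfam, mem_span_triple] at hs
  obtain ⟨r1, r2, r3, rfl⟩ := hs
  funext j
  fin_cases t <;> fin_cases t' <;> simp_all <;> fin_cases j <;>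
    simp (config := { decide := true }) [sigX, e_apply, Fin.ext_iff]

lemma hnzX {t : Fin 3} {s : V} (hs : s ∈ Xfam t) (h : sigX t s = 0) : s = 0 := by
  rw [Xfam, mem_span_triple] at hs
  obtain ⟨r1, r2, r3, rfl⟩ := hs
  fin_cases t <;>
  · have h0 := congrFun h 0
    have h1 := congrFun h 1
    have h2 := congrFun h 2
    simp (config := { decide := true }) [sigX, e_apply, Fin.ext_iff] at h0 h1 h2
    funext k
    fin_cases k <;> simp (config := { decide := true }) [e_apply, Fin.ext_iff, h0, h1, h2]

lemma hinvZ {t t' : Fin 3} (h : t ≠ t') {s : V} (hs : s ∈ Zfam t') : sigZ t s = 0 := by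
  rw [Zfam, mem_span_triple] at hs
  obtain ⟨r1, r2, r3, rfl⟩ := hs
  funext j
  fin_cases t <;> fin_cases t' <;> simp_all <;> fin_cases j <;>
    simp (config := { decide := true }) [sigZ, e_apply, Fin.ext_iff]

lemma hnzZ {t : Fin 3} {s : V} (hs : s ∈ Zfam t) (h : sigZ t s = 0) : s = 0 := by
  rw [Zfam, mem_span_triple] at hs
  obtain ⟨r1, r2, r3, rfl⟩ := hs
  fin_cases t <;>
  · have h0 := congrFun h 0
    have h1 := congrFun h 1
    have h2 := congrFun h 2
    simp (config := { decide := true }) [sigZ, e_apply, Fin.ext_iff] at h0 h1 h2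
    funext k
    fin_cases k <;> simp (config := { decide := true }) [e_apply, Fin.ext_iff, h0, h1, h2]

lemma line_ex {c : V → ZMod 2} {S : Finset V} {v : V} (hv : v ∈ S)
    (hsum : ∑ x ∈ S, c x = 0) (hcv : c v = 1) :
    ∃ x ∈ S, x ≠ v ∧ c x = 1 := by
  by_contra hcon
  push_neg at hcon
  have h' : ∀ x ∈ S, x ≠ v → c x = 0 := fun x hx hne => zmod2_ne_one (hcon x hx hne)
  rw [Finset.sum_eq_single_of_mem v hv h', hcv] at hsum
  exact one_ne_zero hsum

lemma mulVecX (c : V → ZMod 2) (t : Fin 3) (v : V) :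
    HX.mulVec c ⟨t, Submodule.Quotient.mk v⟩
      = ∑ x ∈ Finset.univ.filter (fun x : V => x - v ∈ Xfam t), c x := by
  rw [Finset.sum_filter]
  simp [HX, Matrix.mulVec, dotProduct, boole_mul, Submodule.Quotient.eq]

lemma mulVecZ (c : V → ZMod 2) (t : Fin 3) (v : V) :
    HZ.mulVec c ⟨t, Submodule.Quotient.mk v⟩
      = ∑ x ∈ Finset.univ.filter (fun x : V => x - v ∈ Zfam t), c x := by
  rw [Finset.sum_filter]
  simp [HZ, Matrix.mulVec, dotProduct, boole_mul, Submodule.Quotient.eq]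

lemma extendX (c : V → ZMod 2) (h : HX.mulVec c = 0) (t : Fin 3) (v : V)
    (hv : c v = 1) : ∃ s ∈ Xfam t, s ≠ 0 ∧ c (v + s) = 1 := by
  have h0 := congrFun h ⟨t, Submodule.Quotient.mk v⟩
  rw [Pi.zero_apply, mulVecX] at h0
  have hvmem : v ∈ Finset.univ.filter (fun x : V => x - v ∈ Xfam t) := by
    simp [Submodule.zero_mem]
  obtain ⟨x, hxS, hxne, hx1⟩ := line_ex hvmem h0 hv
  refine ⟨x - v, (Finset.mem_filter.mp hxS).2, sub_ne_zero.mpr hxne, ?_⟩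
  have hxv : v + (x - v) = x := by abel
  rw [hxv]; exact hx1

lemma extendZ (c : V → ZMod 2) (h : HZ.mulVec c = 0) (t : Fin 3) (v : V)
    (hv : c v = 1) : ∃ s ∈ Zfam t, s ≠ 0 ∧ c (v + s) = 1 := by
  have h0 := congrFun h ⟨t, Submodule.Quotient.mk v⟩
  rw [Pi.zero_apply, mulVecZ] at h0
  have hvmem : v ∈ Finset.univ.filter (fun x : V => x - v ∈ Zfam t) := by
    simp [Submodule.zero_mem]
  obtain ⟨x, hxS, hxne, hx1⟩ := line_ex hvmem h0 hv
  refine ⟨x - v, (Finset.mem_filter.mp hxS).2, sub_ne_zero.mpr hxne, ?_⟩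
  have hxv : v + (x - v) = x := by abel
  rw [hxv]; exact hx1

end Aux
section LB

lemma hne_add {x s : Fin 3 → ZMod 2} (hs : s ≠ 0) : x ≠ x + s :=
  fun h => hs (by rwa [left_eq_add] at h)

lemma abstract_lb (fam : Fin 3 → Submodule (ZMod 2) V)
    (sig : Fin 3 → V → Fin 3 → ZMod 2)
    (hadd : ∀ t x y, sig t (x + y) = sig t x + sig t y)
    (hinv : ∀ t t' : Fin 3, t ≠ t' → ∀ s ∈ fam t', sig t s = 0)
    (hnz : ∀ t : Fin 3, ∀ s ∈ fam t, s ≠ 0 → sig t s ≠ 0)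
    (c : V → ZMod 2)
    (hext : ∀ t : Fin 3, ∀ v : V, c v = 1 → ∃ s ∈ fam t, s ≠ 0 ∧ c (v + s) = 1)
    (hc : c ≠ 0) : 8 ≤ hammingNorm c := by
  obtain ⟨v, hv⟩ : ∃ v, c v = 1 := by
    by_contra hcon; push_neg at hcon
    exact hc (funext fun x => zmod2_ne_one (hcon x))
  obtain ⟨s0, hs0m, hs0n, h10⟩ := hext 0 v hv
  obtain ⟨s1, hs1m, hs1n, h01⟩ := hext 1 v hv
  obtain ⟨s1', hs1'm, hs1'n, h11⟩ := hext 1 (v + s0) h10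
  obtain ⟨u00, hu00m, hu00n, k00⟩ := hext 2 v hv
  obtain ⟨u10, hu10m, hu10n, k10⟩ := hext 2 (v + s0) h10
  obtain ⟨u01, hu01m, hu01n, k01⟩ := hext 2 (v + s1) h01
  obtain ⟨u11, hu11m, hu11n, k11⟩ := hext 2 (v + s0 + s1') h11
  have i01 : sig 0 s1 = 0 := hinv 0 1 (by decide) s1 hs1m
  have i01' : sig 0 s1' = 0 := hinv 0 1 (by decide) s1' hs1'm
  have i10 : sig 1 s0 = 0 := hinv 1 0 (by decide) s0 hs0m
  have i20 : sig 2 s0 = 0 := hinv 2 0 (by decide) s0 hs0m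
  have i21 : sig 2 s1 = 0 := hinv 2 1 (by decide) s1 hs1m
  have i21' : sig 2 s1' = 0 := hinv 2 1 (by decide) s1' hs1'm
  have j0 : ∀ u, u ∈ fam 2 → sig 0 u = 0 := fun u hu => hinv 0 2 (by decide) u hu
  have j1 : ∀ u, u ∈ fam 2 → sig 1 u = 0 := fun u hu => hinv 1 2 (by decide) u hu
  have a0 : sig 0 s0 ≠ 0 := hnz 0 s0 hs0m hs0n
  have b1 : sig 1 s1 ≠ 0 := hnz 1 s1 hs1m hs1n
  have b1' : sig 1 s1' ≠ 0 := hnz 1 s1' hs1'm hs1'n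
  have g00 : sig 2 u00 ≠ 0 := hnz 2 u00 hu00m hu00n
  have g10 : sig 2 u10 ≠ 0 := hnz 2 u10 hu10m hu10n
  have g01 : sig 2 u01 ≠ 0 := hnz 2 u01 hu01m hu01n
  have g11 : sig 2 u11 ≠ 0 := hnz 2 u11 hu11m hu11n
  -- sigma 0 values
  have s0_2 : sig 0 (v + s0) = sig 0 v + sig 0 s0 := hadd 0 v s0
  have s0_3 : sig 0 (v + s1) = sig 0 v := by rw [hadd, i01, add_zero]
  have s0_4 : sig 0 (v + s0 + s1') = sig 0 v + sig 0 s0 := by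
    rw [hadd, i01', add_zero, hadd]
  have s0_5 : sig 0 (v + u00) = sig 0 v := by rw [hadd, j0 u00 hu00m, add_zero]
  have s0_6 : sig 0 (v + s0 + u10) = sig 0 v + sig 0 s0 := by
    rw [hadd, j0 u10 hu10m, add_zero, hadd]
  have s0_7 : sig 0 (v + s1 + u01) = sig 0 v := by
    rw [hadd, j0 u01 hu01m, add_zero, s0_3]
  have s0_8 : sig 0 (v + s0 + s1' + u11) = sig 0 v + sig 0 s0 := by
    rw [hadd, j0 u11 hu11m, add_zero, s0_4]
  -- sigma 1 values
  have s1_2 : sig 1 (v + s0) = sig 1 v := by rw [hadd, i10, add_zero]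
  have s1_3 : sig 1 (v + s1) = sig 1 v + sig 1 s1 := hadd 1 v s1
  have s1_4 : sig 1 (v + s0 + s1') = sig 1 v + sig 1 s1' := by
    rw [hadd, s1_2]
  have s1_5 : sig 1 (v + u00) = sig 1 v := by rw [hadd, j1 u00 hu00m, add_zero]
  have s1_6 : sig 1 (v + s0 + u10) = sig 1 v := by
    rw [hadd, j1 u10 hu10m, add_zero, s1_2]
  have s1_7 : sig 1 (v + s1 + u01) = sig 1 v + sig 1 s1 := by
    rw [hadd, j1 u01 hu01m, add_zero, s1_3]
  have s1_8 : sig 1 (v + s0 + s1' + u11) = sig 1 v + sig 1 s1' := by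
    rw [hadd, j1 u11 hu11m, add_zero, s1_4]
  -- sigma 2 values
  have s2_2 : sig 2 (v + s0) = sig 2 v := by rw [hadd, i20, add_zero]
  have s2_3 : sig 2 (v + s1) = sig 2 v := by rw [hadd, i21, add_zero]
  have s2_4 : sig 2 (v + s0 + s1') = sig 2 v := by rw [hadd, i21', add_zero, s2_2]
  have s2_5 : sig 2 (v + u00) = sig 2 v + sig 2 u00 := hadd 2 v u00
  have s2_6 : sig 2 (v + s0 + u10) = sig 2 v + sig 2 u10 := by rw [hadd, s2_2]
  have s2_7 : sig 2 (v + s1 + u01) = sig 2 v + sig 2 u01 := by rw [hadd, s2_3]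
  have s2_8 : sig 2 (v + s0 + s1' + u11) = sig 2 v + sig 2 u11 := by rw [hadd, s2_4]
  have nA : sig 0 v ≠ sig 0 v + sig 0 s0 := hne_add a0
  have nB : sig 1 v ≠ sig 1 v + sig 1 s1 := hne_add b1
  have nB' : sig 1 v ≠ sig 1 v + sig 1 s1' := hne_add b1'
  have nC1 : sig 2 v ≠ sig 2 v + sig 2 u00 := hne_add g00
  have nC2 : sig 2 v ≠ sig 2 v + sig 2 u10 := hne_add g10
  have nC3 : sig 2 v ≠ sig 2 v + sig 2 u01 := hne_add g01
  have nC4 : sig 2 v ≠ sig 2 v + sig 2 u11 := hne_add g11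
  have key : ∀ (t : Fin 3) (x y : V), sig t x ≠ sig t y → x ≠ y :=
    fun t x y h hxy => h (by rw [hxy])
  -- the 28 inequalities
  have n12 : v ≠ v + s0 := key 0 _ _ (by rw [s0_2]; exact nA)
  have n13 : v ≠ v + s1 := key 1 _ _ (by rw [s1_3]; exact nB)
  have n14 : v ≠ v + s0 + s1' := key 0 _ _ (by rw [s0_4]; exact nA)
  have n15 : v ≠ v + u00 := key 2 _ _ (by rw [s2_5]; exact nC1)
  have n16 : v ≠ v + s0 + u10 := key 0 _ _ (by rw [s0_6]; exact nA)
  have n17 : v ≠ v + s1 + u01 := key 1 _ _ (by rw [s1_7]; exact nB)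
  have n18 : v ≠ v + s0 + s1' + u11 := key 0 _ _ (by rw [s0_8]; exact nA)
  have n23 : v + s0 ≠ v + s1 := key 0 _ _ (by rw [s0_2, s0_3]; exact nA.symm)
  have n24 : v + s0 ≠ v + s0 + s1' := key 1 _ _ (by rw [s1_2, s1_4]; exact nB')
  have n25 : v + s0 ≠ v + u00 := key 0 _ _ (by rw [s0_2, s0_5]; exact nA.symm)
  have n26 : v + s0 ≠ v + s0 + u10 := key 2 _ _ (by rw [s2_2, s2_6]; exact nC2)
  have n27 : v + s0 ≠ v + s1 + u01 := key 0 _ _ (by rw [s0_2, s0_7]; exact nA.symm)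
  have n28 : v + s0 ≠ v + s0 + s1' + u11 := key 1 _ _ (by rw [s1_2, s1_8]; exact nB')
  have n34 : v + s1 ≠ v + s0 + s1' := key 0 _ _ (by rw [s0_3, s0_4]; exact nA)
  have n35 : v + s1 ≠ v + u00 := key 1 _ _ (by rw [s1_3, s1_5]; exact nB.symm)
  have n36 : v + s1 ≠ v + s0 + u10 := key 0 _ _ (by rw [s0_3, s0_6]; exact nA)
  have n37 : v + s1 ≠ v + s1 + u01 := key 2 _ _ (by rw [s2_3, s2_7]; exact nC3)
  have n38 : v + s1 ≠ v + s0 + s1' + u11 := key 0 _ _ (by rw [s0_3, s0_8]; exact nA)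
  have n45 : v + s0 + s1' ≠ v + u00 := key 0 _ _ (by rw [s0_4, s0_5]; exact nA.symm)
  have n46 : v + s0 + s1' ≠ v + s0 + u10 := key 1 _ _ (by rw [s1_4, s1_6]; exact nB'.symm)
  have n47 : v + s0 + s1' ≠ v + s1 + u01 := key 0 _ _ (by rw [s0_4, s0_7]; exact nA.symm)
  have n48 : v + s0 + s1' ≠ v + s0 + s1' + u11 := key 2 _ _ (by rw [s2_4, s2_8]; exact nC4)
  have n56 : v + u00 ≠ v + s0 + u10 := key 0 _ _ (by rw [s0_5, s0_6]; exact nA)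
  have n57 : v + u00 ≠ v + s1 + u01 := key 1 _ _ (by rw [s1_5, s1_7]; exact nB)
  have n58 : v + u00 ≠ v + s0 + s1' + u11 := key 0 _ _ (by rw [s0_5, s0_8]; exact nA)
  have n67 : v + s0 + u10 ≠ v + s1 + u01 := key 0 _ _ (by rw [s0_6, s0_7]; exact nA.symm)
  have n68 : v + s0 + u10 ≠ v + s0 + s1' + u11 := key 1 _ _ (by rw [s1_6, s1_8]; exact nB')
  have n78 : v + s1 + u01 ≠ v + s0 + s1' + u11 := key 0 _ _ (by rw [s0_7, s0_8]; exact nA)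
  -- the eight-element set
  have hA : v ∉ ({v + s0, v + s1, v + s0 + s1', v + u00, v + s0 + u10, v + s1 + u01,
      v + s0 + s1' + u11} : Finset V) := by
    simp only [Finset.mem_insert, Finset.mem_singleton]; push_neg
    exact ⟨n12, n13, n14, n15, n16, n17, n18⟩
  have hB : v + s0 ∉ ({v + s1, v + s0 + s1', v + u00, v + s0 + u10, v + s1 + u01,
      v + s0 + s1' + u11} : Finset V) := by
    simp only [Finset.mem_insert, Finset.mem_singleton]; push_neg
    exact ⟨n23, n24, n25, n26, n27, n28⟩
  have hC : v + s1 ∉ ({v + s0 + s1', v + u00, v + s0 + u10, v + s1 + u01,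
      v + s0 + s1' + u11} : Finset V) := by
    simp only [Finset.mem_insert, Finset.mem_singleton]; push_neg
    exact ⟨n34, n35, n36, n37, n38⟩
  have hD : v + s0 + s1' ∉ ({v + u00, v + s0 + u10, v + s1 + u01,
      v + s0 + s1' + u11} : Finset V) := by
    simp only [Finset.mem_insert, Finset.mem_singleton]; push_neg
    exact ⟨n45, n46, n47, n48⟩
  have hE : v + u00 ∉ ({v + s0 + u10, v + s1 + u01, v + s0 + s1' + u11} : Finset V) := by
    simp only [Finset.mem_insert, Finset.mem_singleton]; push_neg
    exact ⟨n56, n57, n58⟩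
  have hF : v + s0 + u10 ∉ ({v + s1 + u01, v + s0 + s1' + u11} : Finset V) := by
    simp only [Finset.mem_insert, Finset.mem_singleton]; push_neg
    exact ⟨n67, n68⟩
  have hG : v + s1 + u01 ∉ ({v + s0 + s1' + u11} : Finset V) := by
    simp only [Finset.mem_singleton]; exact n78
  have hcard : ({v, v + s0, v + s1, v + s0 + s1', v + u00, v + s0 + u10, v + s1 + u01,
      v + s0 + s1' + u11} : Finset V).card = 8 := by
    rw [Finset.card_insert_of_notMem hA, Finset.card_insert_of_notMem hB,
      Finset.card_insert_of_notMem hC, Finset.card_insert_of_notMem hD,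
      Finset.card_insert_of_notMem hE, Finset.card_insert_of_notMem hF,
      Finset.card_insert_of_notMem hG, Finset.card_singleton]
  have hsub : ({v, v + s0, v + s1, v + s0 + s1', v + u00, v + s0 + u10, v + s1 + u01,
      v + s0 + s1' + u11} : Finset V) ⊆ Finset.univ.filter (fun x => c x ≠ 0) := by
    intro x hx
    refine Finset.mem_filter.mpr ⟨Finset.mem_univ _, ?_⟩
    simp only [Finset.mem_insert, Finset.mem_singleton] at hx
    rcases hx with rfl|rfl|rfl|rfl|rfl|rfl|rfl|rfl
    · rw [hv]; exact one_ne_zero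
    · rw [h10]; exact one_ne_zero
    · rw [h01]; exact one_ne_zero
    · rw [h11]; exact one_ne_zero
    · rw [k00]; exact one_ne_zero
    · rw [k10]; exact one_ne_zero
    · rw [k01]; exact one_ne_zero
    · rw [k11]; exact one_ne_zero
  have hle := Finset.card_le_card hsub
  rw [hcard] at hle
  simpa [hammingNorm] using hle

end LB
section Witness

/-- witness codeword: indicator of span{e0,e3,e7} -/
def cw : V → ZMod 2 := fun x =>
  if x 1 = 0 ∧ x 2 = 0 ∧ x 4 = 0 ∧ x 5 = 0 ∧ x 6 = 0 ∧ x 8 = 0 then 1 else 0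

/-- certificate: indicator of span{e1,e2,e6} -/
def uw : V → ZMod 2 := fun x =>
  if x 0 = 0 ∧ x 3 = 0 ∧ x 4 = 0 ∧ x 5 = 0 ∧ x 7 = 0 ∧ x 8 = 0 then 1 else 0

lemma Vadd_self (w : V) : w + w = 0 := by
  funext k; exact zmod2_add_self (w k)

lemma e_ne_zero (i : Fin 9) : e i ≠ 0 := by
  intro h
  have := congrFun h i
  rw [e_apply] at this
  simp at this

lemma sum_invol (f : V → ZMod 2) (S : Finset V) (w : V) (hw : w ≠ 0)
    (hS : ∀ x ∈ S, x + w ∈ S) (hf : ∀ x, f (x + w) = f x) :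
    ∑ x ∈ S, f x = 0 := by
  apply Finset.sum_involution (g := fun x _ => x + w)
  · intro a _; rw [hf]; exact zmod2_add_self _
  · intro a _ _ heq
    exact hw (left_eq_add.mp heq.symm)
  · intro a ha; exact hS a ha
  · intro a _; rw [add_assoc, Vadd_self, add_zero]

lemma filter_invol {p : Submodule (ZMod 2) V} {w : V} (hw : w ∈ p) (v : V) :
    ∀ x ∈ Finset.univ.filter (fun x : V => x - v ∈ p),
      x + w ∈ Finset.univ.filter (fun x : V => x - v ∈ p) := by
  intro x hx
  rw [Finset.mem_filter] at hx ⊢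
  refine ⟨Finset.mem_univ _, ?_⟩
  have : x + w - v = (x - v) + w := by abel
  rw [this]
  exact Submodule.add_mem _ hx.2 hw

lemma e0_mem_X0 : e 0 ∈ Xfam 0 :=
  Submodule.subset_span (Set.mem_insert_iff.mpr (Or.inl rfl))

lemma e3_mem_X1 : e 3 ∈ Xfam 1 :=
  Submodule.subset_span (Set.mem_insert_iff.mpr (Or.inl rfl))

lemma e7_mem_X2 : e 7 ∈ Xfam 2 :=
  Submodule.subset_span (Set.mem_insert_iff.mpr (Or.inr (Set.mem_insert_iff.mpr (Or.inl rfl))))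

lemma e6_mem_Z0 : e 6 ∈ Zfam 0 :=
  Submodule.subset_span (Set.mem_insert_iff.mpr (Or.inr
    (Set.mem_insert_iff.mpr (Or.inr rfl))))

lemma e1_mem_Z1 : e 1 ∈ Zfam 1 :=
  Submodule.subset_span (Set.mem_insert_iff.mpr (Or.inl rfl))

lemma e2_mem_Z2 : e 2 ∈ Zfam 2 :=
  Submodule.subset_span (Set.mem_insert_iff.mpr (Or.inl rfl))

lemma cw_inv0 (x : V) : cw (x + e 0) = cw x := by
  simp (config := { decide := true }) [cw, e_apply, Pi.add_apply]

lemma cw_inv1 (x : V) : cw (x + e 3) = cw x := by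
  simp (config := { decide := true }) [cw, e_apply, Pi.add_apply]

lemma cw_inv2 (x : V) : cw (x + e 7) = cw x := by
  simp (config := { decide := true }) [cw, e_apply, Pi.add_apply]

lemma uw_inv0 (x : V) : uw (x + e 6) = uw x := by
  simp (config := { decide := true }) [uw, e_apply, Pi.add_apply]

lemma uw_inv1 (x : V) : uw (x + e 1) = uw x := by
  simp (config := { decide := true }) [uw, e_apply, Pi.add_apply]

lemma uw_inv2 (x : V) : uw (x + e 2) = uw x := by
  simp (config := { decide := true }) [uw, e_apply, Pi.add_apply]

lemma W2 : HX.mulVec cw = 0 := by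
  funext r
  obtain ⟨t, q⟩ := r
  obtain ⟨v, rfl⟩ := Submodule.Quotient.mk_surjective _ q
  rw [Pi.zero_apply, mulVecX]
  fin_cases t
  · exact sum_invol cw _ (e 0) (e_ne_zero 0) (filter_invol e0_mem_X0 v) cw_inv0
  · exact sum_invol cw _ (e 3) (e_ne_zero 3) (filter_invol e3_mem_X1 v) cw_inv1
  · exact sum_invol cw _ (e 7) (e_ne_zero 7) (filter_invol e7_mem_X2 v) cw_inv2

noncomputable def phi : (V → ZMod 2) →ₗ[ZMod 2] ZMod 2 where
  toFun f := ∑ x : V, uw x * f x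
  map_add' f g := by
    simp [mul_add, Finset.sum_add_distrib]
  map_smul' r f := by
    simp [Finset.mul_sum, mul_left_comm]

lemma phi_rows : ∀ s : RZ, phi (HZ s) = 0 := by
  rintro ⟨j, q⟩
  obtain ⟨v, rfl⟩ := Submodule.Quotient.mk_surjective _ q
  show ∑ x : V, uw x * HZ ⟨j, Submodule.Quotient.mk v⟩ x = 0
  have hconv : ∑ x : V, uw x * HZ ⟨j, Submodule.Quotient.mk v⟩ x
      = ∑ x ∈ Finset.univ.filter (fun x : V => x - v ∈ Zfam j), uw x := by
    rw [Finset.sum_filter]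
    simp [HZ, mul_boole, Submodule.Quotient.eq]
  rw [hconv]
  fin_cases j
  · exact sum_invol uw _ (e 6) (e_ne_zero 6) (filter_invol e6_mem_Z0 v) uw_inv0
  · exact sum_invol uw _ (e 1) (e_ne_zero 1) (filter_invol e1_mem_Z1 v) uw_inv1
  · exact sum_invol uw _ (e 2) (e_ne_zero 2) (filter_invol e2_mem_Z2 v) uw_inv2

lemma phi_cw : phi cw = 1 := by
  show ∑ x : V, uw x * cw x = 1
  have hpt : ∀ x : V, uw x * cw x = if x = 0 then 1 else 0 := by
    intro x
    by_cases hx : x = 0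
    · subst hx; simp [uw, cw]
    · rw [if_neg hx]
      unfold uw cw
      split_ifs with h1 h2
      · exfalso
        apply hx
        obtain ⟨a0, a3, a4, a5, a7, a8⟩ := h1
        obtain ⟨b1, b2, _, _, b6, _⟩ := h2
        funext k
        fin_cases k <;> simp only [Pi.zero_apply] <;> assumption
      all_goals simp
  rw [Finset.sum_congr rfl (fun x _ => hpt x)]
  simp

lemma W3 : cw ∉ rowSpace HZ := by
  intro hmem
  have hker : rowSpace HZ ≤ LinearMap.ker phi := by
    rw [rowSpace, Submodule.span_le]
    rintro _ ⟨s, rfl⟩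
    simp only [SetLike.mem_coe, LinearMap.mem_ker]
    exact phi_rows s
  have := hker hmem
  rw [LinearMap.mem_ker, phi_cw] at this
  exact one_ne_zero this

def gw : (Fin 3 → ZMod 2) → V := fun p k =>
  if k = 0 then p 0 else if k = 3 then p 1 else if k = 7 then p 2 else 0

lemma gw_inj : Function.Injective gw := by
  intro p q h
  funext j
  fin_cases j
  · simpa (config := { decide := true }) [gw] using congrFun h 0
  · simpa (config := { decide := true }) [gw] using congrFun h 3
  · simpa (config := { decide := true }) [gw] using congrFun h 7

lemma W1 : hammingNorm cw = 8 := by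
  have himg : (Finset.univ.filter (fun x : V => cw x ≠ 0)) = Finset.univ.image gw := by
    ext x
    simp only [Finset.mem_filter, Finset.mem_image, Finset.mem_univ, true_and]
    constructor
    · intro hx
      have hx' : x 1 = 0 ∧ x 2 = 0 ∧ x 4 = 0 ∧ x 5 = 0 ∧ x 6 = 0 ∧ x 8 = 0 := by
        by_contra hcon
        simp [cw, hcon] at hx
      obtain ⟨b1, b2, b4, b5, b6, b8⟩ := hx'
      refine ⟨![x 0, x 3, x 7], ?_⟩
      funext k
      fin_cases k <;>
        simp (config := { decide := true }) [gw, b1, b2, b4, b5, b6, b8]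
    · rintro ⟨p, rfl⟩
      simp (config := { decide := true }) [cw, gw]
  have hcard : (Finset.univ.filter (fun x : V => cw x ≠ 0)).card = 8 := by
    rw [himg, Finset.card_image_of_injective _ gw_inj]
    simp [Fintype.card_fun]
  simpa [hammingNorm] using hcard

end Witness
theorem stmt11 :
    (∀ c : V → ZMod 2, HX.mulVec c = 0 → c ∉ rowSpace HZ → 8 ≤ hammingNorm c) ∧
    (∀ c : V → ZMod 2, HZ.mulVec c = 0 → c ∉ rowSpace HX → 8 ≤ hammingNorm c) ∧
    (∃ c : V → ZMod 2, hammingNorm c = 8 ∧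
      ((HX.mulVec c = 0 ∧ c ∉ rowSpace HZ) ∨ (HZ.mulVec c = 0 ∧ c ∉ rowSpace HX))) := by
  refine ⟨?_, ?_, ⟨cw, W1, Or.inl ⟨W2, W3⟩⟩⟩
  · intro c h hnr
    have hc : c ≠ 0 := fun h0 => hnr (h0 ▸ Submodule.zero_mem _)
    exact abstract_lb Xfam sigX sigX_add (fun t t' ht s hs => hinvX ht hs)
      (fun t s hs hn hz => hn (hnzX hs hz)) c (fun t v hv => extendX c h t v hv) hc
  · intro c h hnr
    have hc : c ≠ 0 := fun h0 => hnr (h0 ▸ Submodule.zero_mem _)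
    exact abstract_lb Zfam sigZ sigZ_add (fun t t' ht s hs => hinvZ ht hs)
      (fun t s hs hn hz => hn (hnzZ hs hz)) c (fun t v hv => extendZ c h t v hv) hc
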